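/- (LU factorization of a shifted companion matrix) Let C be the n×n companion matrix of P(x) = x^n + m_{n-1}x^{n-1} + ⋯ + m_0, σ a scalar, and H_k(σ) the Horner values H_0(σ)=1, H_k(σ) = σ·H_{k-1}(σ) + m_{n-k}. Assume H_k(σ) ≠ 0 for k = 0,…,n-1. Define L as unit lower bidiagonal with subdiagonal entries L(k+1,k) = -H_{k-1}(σ)/H_k(σ), and U as upper triangular with U(k,k) = -H_k(σ)/H_{k-1}(σ) for k < n, U(n,n) = -P(σ)/H_{n-1}(σ), and U(k,j) = -m_{n-j}/H_{k-1}(σ) for k < j ≤ n. Then L U = C - σ I. -/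

import Mathlib

open Matrix

/-- LU factorization of a shifted companion matrix in terms of Horner values:
with `H_0(σ)=1`, `H_k(σ)=σH_{k-1}(σ)+m_{n-k}` all nonzero for `k < n`, the stated
bidiagonal `L` and quasiseparable upper-triangular `U` satisfy `L U = C - σ I`.
(0-based indexing throughout; `H (j+1)` plays the role of 1-based `H_{k}` at row `k = j+1`,
and `H n = P(σ)`.) -/
theorem companion_shifted_LU {F : Type*} [Field F] {n : ℕ} (m : ℕ → F) (σ : F)
    (H : ℕ → F)
    (hH0 : H 0 = 1)
    (hHrec : ∀ k, k < n → H (k + 1) = σ * H k + m (n - (k + 1)))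
    (hHne : ∀ k, k < n → H k ≠ 0) :
    let C : Matrix (Fin n) (Fin n) F :=
      Matrix.of fun i j =>
        if i.1 = 0 then -m (n - 1 - j.1) else if i.1 = j.1 + 1 then 1 else 0
    let L : Matrix (Fin n) (Fin n) F :=
      Matrix.of fun i j =>
        if i = j then 1 else if i.1 = j.1 + 1 then -H j.1 / H (j.1 + 1) else 0
    let U : Matrix (Fin n) (Fin n) F :=
      Matrix.of fun i j =>
        if i = j then -H (i.1 + 1) / H i.1
        else if i.1 < j.1 then -m (n - 1 - j.1) / H i.1 else 0
    L * U = C - σ • (1 : Matrix (Fin n) (Fin n) F) := by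
  intro C L U
  ext i j
  rw [Matrix.mul_apply]
  obtain ⟨iv, hi⟩ := i
  obtain ⟨jv, hj⟩ := j
  rcases iv with _ | iv
  · -- row 0
    rw [Finset.sum_eq_single (⟨0, hi⟩ : Fin n)]
    · simp only [L, U, C, Matrix.of_apply, Matrix.sub_apply, Matrix.smul_apply,
        Matrix.one_apply, smul_eq_mul, if_pos rfl, one_mul, Fin.mk.injEq]
      rcases Nat.eq_zero_or_pos jv with h0 | h0
      · subst h0
        simp only [if_pos rfl]
        rw [hHrec 0 (by omega), hH0]
        rw [show n - 1 - 0 = n - (0 + 1) from by omega]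
        simp only [if_true]
        ring
      · simp only [show ¬(0 = jv) from by omega, h0, if_false, if_true, hH0, div_one,
          ite_false, ite_true]
        simp
    · intro b _ hb
      simp only [L, Matrix.of_apply]
      rw [if_neg (fun hh => hb hh.symm), if_neg (by omega), zero_mul]
    · simp
  · -- row iv+1
    have hiv : iv < n := by omega
    set i0 : Fin n := ⟨iv, hiv⟩ with hi0
    set i1 : Fin n := ⟨iv + 1, hi⟩ with hi1
    have hkey : ∀ k : Fin n, L i1 k * U k ⟨jv, hj⟩ =
        (if k = i1 then U i1 ⟨jv, hj⟩ else 0) +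
        (if k = i0 then (-H iv / H (iv + 1)) * U i0 ⟨jv, hj⟩ else 0) := by
      intro k
      rcases eq_or_ne k i1 with rfl | h1
      · rw [if_pos rfl, if_neg (by simp [hi0, hi1, Fin.ext_iff])]
        simp [L]
      · rw [if_neg h1]
        rcases eq_or_ne k i0 with rfl | h0
        · rw [if_pos rfl, zero_add]
          simp only [L, Matrix.of_apply]
          rw [if_neg (fun hh => h1 hh.symm), if_pos (by simp [hi0, hi1])]
        · rw [if_neg h0, add_zero]
          simp only [L, Matrix.of_apply]
          rw [if_neg (fun hh => h1 hh.symm), if_neg (fun hh => h0 (Fin.ext (show k.1 = iv by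
            have hh' : iv + 1 = k.1 + 1 := hh
            omega))), zero_mul]
    rw [Finset.sum_congr rfl fun k _ => hkey k, Finset.sum_add_distrib,
      Finset.sum_ite_eq' Finset.univ i1, Finset.sum_ite_eq' Finset.univ i0]
    simp only [Finset.mem_univ, if_true]
    simp only [U, C, Matrix.of_apply, Matrix.sub_apply, Matrix.smul_apply, Matrix.one_apply,
      smul_eq_mul, hi0, hi1, Fin.mk.injEq]
    have hHiv := hHne iv hiv
    have hHiv1 := hHne (iv + 1) hi
    rcases Nat.lt_trichotomy jv (iv + 1) with h | h | h
    · rcases Nat.lt_or_ge jv iv with h' | h'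
      · simp only [show ¬(iv + 1 = jv) from by omega, show ¬(iv + 1 < jv) from by omega,
          show ¬(iv = jv) from by omega, show ¬(iv < jv) from by omega,
          show ¬(iv + 1 = 0) from by omega, show ¬(iv + 1 = jv + 1) from by omega, if_false]
        ring
      · have : jv = iv := by omega
        subst this
        simp only [show ¬(jv + 1 = jv) from by omega, show ¬(jv + 1 < jv) from by omega,
          if_pos rfl, show ¬(jv + 1 = 0) from by omega, if_false, if_true]
        field_simp
        ring
    · subst h
      simp only [if_pos rfl, show ¬(iv = iv + 1) from by omega, show iv < iv + 1 from by omega,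
        show ¬(iv + 1 = 0) from by omega, show ¬(iv + 1 = iv + 1 + 1) from by omega,
        if_false, if_true]
      rw [show n - 1 - (iv + 1) = n - (iv + 1 + 1) from by omega, hHrec (iv + 1) hj]
      field_simp
      ring
    · simp only [show ¬(iv + 1 = jv) from by omega, h, show ¬(iv = jv) from by omega,
        show iv < jv from by omega, show ¬(iv + 1 = 0) from by omega,
        show ¬(iv + 1 = jv + 1) from by omega, if_false, if_true]
      field_simp
      ring
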